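/- Let E be a complex Banach space and let ρ : ℂ → (E →L[ℂ] E) be analytic at every point of D^× = {z ∈ ℂ : 0 < |z| < 1} and satisfy ρ(z·w) = ρ(z) ∘ ρ(w) for all z, w ∈ D^×. Fix k ∈ ℤ and t ∈ (0,1), and for x ∈ E set l_k x := (2πi)⁻¹ ∮_{|z|=t} z^{−k−1} (ρ(z) x) dz. Then l_k is D^×-equivariant: for every q ∈ D^× and every x ∈ E, l_k(ρ(q) x) = ρ(q)(l_k x). -/

import Mathlib

/-- The weight-space projection `l_k x = (2πi)⁻¹ ∮_{|z|=t} z^{-k-1} (ρ z x) dz` is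
`D^×`-equivariant: `l_k (ρ q x) = ρ q (l_k x)` for all `q ∈ D^×` and `x ∈ E`. -/
theorem stmt_8 {E : Type*} [NormedAddCommGroup E] [NormedSpace ℂ E] [CompleteSpace E]
    (ρ : ℂ → E →L[ℂ] E)
    (hρ : ∀ z : ℂ, 0 < ‖z‖ → ‖z‖ < 1 → AnalyticAt ℂ ρ z)
    (hmul : ∀ z w : ℂ, 0 < ‖z‖ → ‖z‖ < 1 →
      0 < ‖w‖ → ‖w‖ < 1 → ρ (z * w) = (ρ z).comp (ρ w))
    (k : ℤ) (t : ℝ) (ht : t ∈ Set.Ioo (0 : ℝ) 1)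
    (q : ℂ) (hq0 : 0 < ‖q‖) (hq1 : ‖q‖ < 1) (x : E) :
    (2 * (Real.pi : ℂ) * Complex.I)⁻¹ • (∮ z in C(0, t), z ^ (-k - 1) • ρ z (ρ q x))
      = ρ q ((2 * (Real.pi : ℂ) * Complex.I)⁻¹ • ∮ z in C(0, t), z ^ (-k - 1) • ρ z x) := by
  obtain ⟨ht0, ht1⟩ := ht
  have habs : ∀ θ : ℝ, ‖circleMap 0 t θ‖ = t := by
    intro θ; simp [norm_circleMap_zero, abs_of_pos ht0]
  have hcomm : ∀ z : ℂ, ‖z‖ = t → ρ z (ρ q x) = ρ q (ρ z x) := by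
    intro z hz
    have hz0 : 0 < ‖z‖ := hz ▸ ht0
    have hz1 : ‖z‖ < 1 := hz ▸ ht1
    have h1 := hmul z q hz0 hz1 hq0 hq1
    have h2 := hmul q z hq0 hq1 hz0 hz1
    rw [mul_comm] at h2
    have h3 : (ρ z).comp (ρ q) = (ρ q).comp (ρ z) := by rw [← h1, ← h2]
    exact DFunLike.congr_fun h3 x
  rw [map_smul]
  congr 1
  simp only [circleIntegral]
  have hcont : Continuous fun θ : ℝ =>
      deriv (circleMap 0 t) θ • (circleMap 0 t θ) ^ (-k - 1) • ρ (circleMap 0 t θ) x := by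
    have hc1 : Continuous fun θ : ℝ => deriv (circleMap 0 t) θ := by
      simp only [deriv_circleMap]; exact (continuous_circleMap 0 t).mul continuous_const
    have hc2 : Continuous fun θ : ℝ => (circleMap 0 t θ) ^ (-k - 1) := by
      rw [continuous_iff_continuousAt]
      intro θ
      exact ((continuous_circleMap 0 t).continuousAt).zpow₀ _
        (Or.inl (by simpa using ne_of_gt ht0))
    have hc3 : Continuous fun θ : ℝ => ρ (circleMap 0 t θ) x := by
      rw [continuous_iff_continuousAt]
      intro θ
      have h0 : 0 < ‖circleMap 0 t θ‖ := by rw [habs θ]; exact ht0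
      have h1 : ‖circleMap 0 t θ‖ < 1 := by rw [habs θ]; exact ht1
      have := ((hρ _ h0 h1).continuousAt).comp
        ((continuous_circleMap 0 t).continuousAt (x := θ))
      exact ((ContinuousLinearMap.apply ℂ E x).continuous.continuousAt).comp this
    exact hc1.smul (hc2.smul hc3)
  calc (∫ θ in (0:ℝ)..2 * Real.pi,
        deriv (circleMap 0 t) θ • (circleMap 0 t θ) ^ (-k - 1) • ρ (circleMap 0 t θ) (ρ q x))
      = ∫ θ in (0:ℝ)..2 * Real.pi,
        ρ q (deriv (circleMap 0 t) θ • (circleMap 0 t θ) ^ (-k - 1) • ρ (circleMap 0 t θ) x) := by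
        refine intervalIntegral.integral_congr fun θ _ => ?_
        rw [hcomm _ (habs θ), map_smul, map_smul]
    _ = ρ q (∫ θ in (0:ℝ)..2 * Real.pi,
        deriv (circleMap 0 t) θ • (circleMap 0 t θ) ^ (-k - 1) • ρ (circleMap 0 t θ) x) :=
        (ρ q).intervalIntegral_comp_comm (hcont.intervalIntegrable _ _)
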